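/- Assume the separation hypothesis. Let λ, μ ∈ P_n with λ ⊴ μ and λ ≠ μ. If there exists a standard tableau t of shape λ with res(t) = res(t^μ), then λ ⊴' μ (and λ ≠ μ). -/
import Mathlib


/-- The total order on boxes `(i,l)`: `(i,l) ≤ (i',l')` iff `l < l'`, or `l = l'`
and `i ≤ i'`. -/
def bLE {p d : ℕ} (b b' : Fin p × Fin d) : Prop :=
  b.2 < b'.2 ∨ (b.2 = b'.2 ∧ b.1 ≤ b'.1)

/-- The strict version of the total order on boxes. -/
def bLT {p d : ℕ} (b b' : Fin p × Fin d) : Prop :=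
  b.2 < b'.2 ∨ (b.2 = b'.2 ∧ b.1 < b'.1)

/-- The partial order `≤'` on boxes: `(i,l) ≤' (i',l')` iff `l < l'` or
`(i,l) = (i',l')`. -/
def bLE' {p d : ℕ} (b b' : Fin p × Fin d) : Prop :=
  b.2 < b'.2 ∨ b = b'

/-- A 3D multipartition of `n` with at most two nonempty components: either a
single column of `n` nodes on a box, or two columns of sizes `c₁ ≥ 1` and
`n - c₁ ≥ 1` on boxes `b₁ < b₂` (in the total order). -/
inductive MP (p d n : ℕ) : Type where
  | single (b : Fin p × Fin d) : MP p d n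
  | double (b₁ b₂ : Fin p × Fin d) (c₁ : ℕ)
      (hlt : bLT b₁ b₂) (hc1 : 1 ≤ c₁) (hc2 : c₁ < n) : MP p d n

/-- The dominance-type relation on multipartitions associated to a relation `rB`
on boxes; with `rB = bLE` this is `⊴` and with `rB = bLE'` this is `⊴'`.
For doubles, `a = c₁ - c₂ = 2c₁ - n`. -/
def dom {p d n : ℕ} (rB : (Fin p × Fin d) → (Fin p × Fin d) → Prop) :
    MP p d n → MP p d n → Prop
  | .single b₁, .single b₂ => rB b₁ b₂
  | .single _, .double _ _ _ _ _ _ => False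
  | .double b₁ _ _ _ _ _, .single b₃ => rB b₁ b₃
  | .double b₁ b₂ c _ _ _, .double b₃ b₄ c' _ _ _ =>
      rB b₁ b₃ ∧ rB b₂ b₄ ∧
      (|2 * (c : ℤ) - n| < |2 * (c' : ℤ) - n| ∨
       (|2 * (c : ℤ) - n| = |2 * (c' : ℤ) - n| ∧ 2 * (c : ℤ) - n ≥ 2 * (c' : ℤ) - n) ∨
       (|2 * (c : ℤ) - n| = |2 * (c' : ℤ) - n| ∧ 2 * (c : ℤ) - n < 2 * (c' : ℤ) - n ∧
        rB b₂ b₃))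

/-- A node: a (1-based) row index together with a box. -/
abbrev Nd (p d : ℕ) : Type := ℕ × (Fin p × Fin d)

/-- The set of nodes of a multipartition. -/
def nodes {p d n : ℕ} : MP p d n → Set (Nd p d)
  | .single b => {x | x.2 = b ∧ 1 ≤ x.1 ∧ x.1 ≤ n}
  | .double b₁ b₂ c₁ _ _ _ =>
      {x | (x.2 = b₁ ∧ 1 ≤ x.1 ∧ x.1 ≤ c₁) ∨ (x.2 = b₂ ∧ 1 ≤ x.1 ∧ x.1 ≤ n - c₁)}

/-- A tableau of shape `l`: a bijection from `{1, …, n}` (modelled as `Fin n`,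
with `m : Fin n` representing the entry `m + 1`) onto the nodes of `l`. -/
def IsTab {p d n : ℕ} (l : MP p d n) (t : Fin n → Nd p d) : Prop :=
  Function.Injective t ∧ Set.range t = nodes l

/-- A standard tableau: a tableau in which, within each column, the entries
increase with the row index. -/
def IsStd {p d n : ℕ} (l : MP p d n) (t : Fin n → Nd p d) : Prop :=
  IsTab l t ∧
  ∀ m m' : Fin n, (t m).2 = (t m').2 → (t m).1 < (t m').1 → m < m'

/-- The residue of a node: the node in row `a` on box `(i,l)` has residue
`(i, j_l + 1 − a) ∈ ℤ/pℤ × ℤ/eℤ`. -/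
def resNd {p d : ℕ} (e : ℕ) (j : Fin d → ZMod e) (x : Nd p d) : ZMod p × ZMod e :=
  ((x.2.1 : ZMod p), j x.2.2 + 1 - (x.1 : ZMod e))

/-- The separation hypothesis: the `2r` elements `(i, j_l)` and `(i, j_l − 1)`,
for `(i,l) ∈ 𝒦`, are pairwise distinct. -/
def SepHyp (p d e : ℕ) (j : Fin d → ZMod e) : Prop :=
  Function.Injective (fun x : (Fin p × Fin d) × Bool =>
    (((x.1.1 : ZMod p), j x.1.2 - (if x.2 then 1 else 0)) : ZMod p × ZMod e))

/-- The total order on nodes: `(a,(i,l)) < (a',(i',l'))` iff `a < a'`, or `a = a'`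
and `l < l'`, or `a = a'`, `l = l'` and `i < i'`. -/
def ndLT {p d : ℕ} (x y : Nd p d) : Prop :=
  x.1 < y.1 ∨ (x.1 = y.1 ∧ (x.2.2 < y.2.2 ∨ (x.2.2 = y.2.2 ∧ x.2.1 < y.2.1)))

lemma bLT_ne {p d : ℕ} {b b' : Fin p × Fin d} (h : bLT b b') : b ≠ b' := by
  rintro rfl
  rcases h with h | ⟨_, h⟩ <;> exact lt_irrefl _ h

lemma bLT_asymm {p d : ℕ} {b b' : Fin p × Fin d} (h : bLT b b') (h' : bLT b' b) : False := by
  rcases h with h | ⟨e1, h⟩ <;> rcases h' with h' | ⟨e2, h'⟩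
  · exact absurd h' (lt_asymm h)
  · rw [e2] at h; exact lt_irrefl _ h
  · rw [e1] at h'; exact lt_irrefl _ h'
  · exact absurd h' (lt_asymm h)

lemma bLE_bLT_asymm {p d : ℕ} {b b' : Fin p × Fin d} (h : bLE b b') (h' : bLT b' b) : False := by
  rcases h with h | ⟨e1, h⟩ <;> rcases h' with h' | ⟨e2, h'⟩
  · exact absurd h' (lt_asymm h)
  · rw [e2] at h; exact lt_irrefl _ h
  · rw [e1] at h'; exact lt_irrefl _ h'
  · exact absurd h (not_le.mpr h')

lemma aux_row_ge_one {p d n : ℕ} {l : MP p d n} {x : Nd p d} (h : x ∈ nodes l) : 1 ≤ x.1 := by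
  cases l with
  | single b => exact h.2.1
  | double b1 b2 c h' hc1 hc2 => rcases h with ⟨_, h, _⟩ | ⟨_, h, _⟩ <;> exact h

lemma aux_nodes_mono {p d n : ℕ} {l : MP p d n} {x : Nd p d} (h : x ∈ nodes l)
    {a : ℕ} (h1 : 1 ≤ a) (h2 : a ≤ x.1) : ((a, x.2) : Nd p d) ∈ nodes l := by
  cases l with
  | single b => exact ⟨h.1, h1, h2.trans h.2.2⟩
  | double b1 b2 c h' hc1 hc2 =>
    rcases h with ⟨hb, _, hc⟩ | ⟨hb, _, hc⟩
    · exact Or.inl ⟨hb, h1, h2.trans hc⟩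
    · exact Or.inr ⟨hb, h1, h2.trans hc⟩

lemma aux_t_first {p d n : ℕ} {l : MP p d n} {t : Fin n → Nd p d} (ht : IsStd l t)
    (z : Fin n) (hz : z.1 = 0) : (t z).1 = 1 := by
  have hmem : t z ∈ nodes l := ht.1.2 ▸ Set.mem_range_self z
  have h1 : 1 ≤ (t z).1 := aux_row_ge_one hmem
  by_contra hcon
  have hmem' : ((1, (t z).2) : Nd p d) ∈ nodes l := aux_nodes_mono hmem le_rfl h1
  obtain ⟨k, hk⟩ : ∃ k, t k = (1, (t z).2) := by rw [← ht.1.2] at hmem'; exact hmem'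
  have hlt := ht.2 k z (by rw [hk]) (by rw [hk]; simp; omega)
  rw [Fin.lt_def, hz] at hlt
  omega

lemma aux_u_first {p d n : ℕ} {m : MP p d n} {u : Fin n → Nd p d} (hu : IsTab m u)
    (hinit : ∀ a b : Fin n, a < b → ndLT (u a) (u b)) (z : Fin n) (hz : z.1 = 0) :
    (u z).1 = 1 := by
  have hmem : u z ∈ nodes m := hu.2 ▸ Set.mem_range_self z
  have h1 : 1 ≤ (u z).1 := aux_row_ge_one hmem
  by_contra hcon
  have hmem' : ((1, (u z).2) : Nd p d) ∈ nodes m := aux_nodes_mono hmem le_rfl h1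
  obtain ⟨k, hk⟩ : ∃ k, u k = (1, (u z).2) := by rw [← hu.2] at hmem'; exact hmem'
  have hzk : z < k := by
    rw [Fin.lt_def, hz]
    rcases Nat.eq_zero_or_pos k.1 with h | h
    · exfalso
      have hkz : k = z := Fin.ext (by omega)
      rw [hkz] at hk
      exact hcon (congrArg Prod.fst hk)
    · omega
  have hnd := hinit z k hzk
  rw [hk] at hnd
  rcases hnd with h | ⟨h, _⟩ <;> simp at h <;> omega

lemma aux_t_o {p d n : ℕ} {l : MP p d n} {t : Fin n → Nd p d} (ht : IsStd l t)
    (z o : Fin n) (hz : z.1 = 0) (ho : o.1 = 1) (hzrow : (t z).1 = 1) :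
    ((t o).2 = (t z).2 ∧ (t o).1 = 2) ∨ ((t o).2 ≠ (t z).2 ∧ (t o).1 = 1) := by
  have hmem : t o ∈ nodes l := ht.1.2 ▸ Set.mem_range_self o
  have h1 : 1 ≤ (t o).1 := aux_row_ge_one hmem
  have hoz : o ≠ z := by intro h; rw [h, hz] at ho; omega
  by_cases hbox : (t o).2 = (t z).2
  · left
    refine ⟨hbox, ?_⟩
    have hne1 : (t o).1 ≠ 1 := by
      intro h
      have heq : t o = t z := by
        have h2 : t o = (1, (t z).2) := Prod.ext_iff.mpr ⟨h, hbox⟩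
        have h3 : t z = (1, (t z).2) := Prod.ext_iff.mpr ⟨hzrow, rfl⟩
        rw [h2, h3]
      exact hoz (ht.1.1 heq)
    by_contra hcon
    have hmem' : ((2, (t o).2) : Nd p d) ∈ nodes l := aux_nodes_mono hmem (by omega) (by omega)
    obtain ⟨k, hk⟩ : ∃ k, t k = (2, (t o).2) := by rw [← ht.1.2] at hmem'; exact hmem'
    have hlt := ht.2 k o (by rw [hk]) (by rw [hk]; simp; omega)
    rw [Fin.lt_def, ho] at hlt
    have hk0 : k = z := Fin.ext (by omega)
    rw [hk0] at hk
    have := congrArg Prod.fst hk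
    rw [hzrow] at this
    simp at this
  · right
    refine ⟨hbox, ?_⟩
    by_contra hcon
    have hmem' : ((1, (t o).2) : Nd p d) ∈ nodes l := aux_nodes_mono hmem le_rfl h1
    obtain ⟨k, hk⟩ : ∃ k, t k = (1, (t o).2) := by rw [← ht.1.2] at hmem'; exact hmem'
    have hlt := ht.2 k o (by rw [hk]) (by rw [hk]; simp; omega)
    rw [Fin.lt_def, ho] at hlt
    have hk0 : k = z := Fin.ext (by omega)
    rw [hk0] at hk
    exact hbox (congrArg Prod.snd hk).symm

lemma aux_u_z_double {p d n : ℕ} {b3 b4 : Fin p × Fin d} {c' : ℕ}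
    {hlt : bLT b3 b4} {hc1 : 1 ≤ c'} {hc2 : c' < n} {u : Fin n → Nd p d}
    (hu : IsTab (MP.double b3 b4 c' hlt hc1 hc2) u)
    (hinit : ∀ a b : Fin n, a < b → ndLT (u a) (u b))
    (z : Fin n) (hz : z.1 = 0) : u z = (1, b3) := by
  have hrow : (u z).1 = 1 := aux_u_first hu hinit z hz
  have hmem : u z ∈ nodes (MP.double b3 b4 c' hlt hc1 hc2) := hu.2 ▸ Set.mem_range_self z
  rcases hmem with ⟨hb, _, _⟩ | ⟨hb, _, _⟩
  · exact Prod.ext_iff.mpr ⟨hrow, hb⟩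
  · exfalso
    obtain ⟨k, hk⟩ : ∃ k, u k = (1, b3) := by
      have hm : ((1, b3) : Nd p d) ∈ nodes (MP.double b3 b4 c' hlt hc1 hc2) :=
        Or.inl ⟨rfl, le_rfl, hc1⟩
      rw [← hu.2] at hm; exact hm
    have hkz : k ≠ z := by
      intro h; rw [h] at hk
      have h2 := congrArg Prod.snd hk
      rw [hb] at h2
      exact bLT_ne hlt h2.symm
    have hzk : z < k := by
      rw [Fin.lt_def, hz]
      have : k.1 ≠ 0 := fun h => hkz (Fin.ext (by omega))
      omega
    have hnd := hinit z k hzk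
    rw [hk] at hnd
    rcases hnd with h | ⟨_, h⟩
    · simp at h; omega
    · rw [hb] at h
      exact bLT_asymm hlt h

lemma aux_u_o_double {p d n : ℕ} {b3 b4 : Fin p × Fin d} {c' : ℕ}
    {hlt : bLT b3 b4} {hc1 : 1 ≤ c'} {hc2 : c' < n} {u : Fin n → Nd p d}
    (hu : IsTab (MP.double b3 b4 c' hlt hc1 hc2) u)
    (hinit : ∀ a b : Fin n, a < b → ndLT (u a) (u b))
    (z o : Fin n) (hz : z.1 = 0) (ho : o.1 = 1) : u o = (1, b4) := by
  have huz := aux_u_z_double hu hinit z hz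
  obtain ⟨k, hk⟩ : ∃ k, u k = (1, b4) := by
    have hm : ((1, b4) : Nd p d) ∈ nodes (MP.double b3 b4 c' hlt hc1 hc2) :=
      Or.inr ⟨rfl, le_rfl, by omega⟩
    rw [← hu.2] at hm; exact hm
  have hkz : k ≠ z := by
    intro h; rw [h, huz] at hk
    exact bLT_ne hlt (show b3 = b4 from congrArg Prod.snd hk)
  rcases eq_or_ne k o with h | h
  · rw [← h]; exact hk
  · exfalso
    have hok : o < k := by
      rw [Fin.lt_def, ho]
      have h0 : k.1 ≠ 0 := fun hh => hkz (Fin.ext (by omega))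
      have h1 : k.1 ≠ 1 := fun hh => h (Fin.ext (by omega))
      omega
    have hnd := hinit o k hok
    rw [hk] at hnd
    have hrow : 1 ≤ (u o).1 := aux_row_ge_one
      (show u o ∈ nodes (MP.double b3 b4 c' hlt hc1 hc2) from hu.2 ▸ Set.mem_range_self o)
    rcases hnd with hh | ⟨heq, hh⟩
    · simp at hh; omega
    · have hmem : u o ∈ nodes (MP.double b3 b4 c' hlt hc1 hc2) := hu.2 ▸ Set.mem_range_self o
      rcases hmem with ⟨hb, _, _⟩ | ⟨hb, _, _⟩
      · have heq2 : u o = u z := by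
          rw [huz]; exact Prod.ext_iff.mpr ⟨heq, hb⟩
        have := hu.1 heq2
        rw [Fin.ext_iff, ho, hz] at this
        omega
      · rw [hb] at hh
        exact bLT_asymm hh hh

/-- under the separation hypothesis, if `λ ⊴ μ`, `λ ≠ μ`, and some
standard tableau `t` of shape `λ` has the same residue sequence as the initial
tableau `t^μ` of shape `μ` (the tableau whose entries increase along the total
order on nodes), then `λ ⊴' μ` (and `λ ≠ μ`). -/
theorem dom_bLE'_of_res_eq_initial (p d n : ℕ) (hp : 1 ≤ p) (hd : 1 ≤ d) (hn : 1 ≤ n)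
    (e : ℕ) (j : Fin d → ZMod e) (hsep : SepHyp p d e j)
    (l m : MP p d n) (hle : dom bLE l m) (hne : l ≠ m)
    (t : Fin n → Nd p d) (ht : IsStd l t)
    (u : Fin n → Nd p d) (hu : IsTab m u)
    (hinit : ∀ a b : Fin n, a < b → ndLT (u a) (u b))
    (hres : ∀ a : Fin n, resNd e j (t a) = resNd e j (u a)) :
    dom bLE' l m ∧ l ≠ m := by
  refine ⟨?_, hne⟩
  haveI : NeZero p := ⟨by omega⟩
  have sep_ff : ∀ b b' : Fin p × Fin d,
      (((b.1 : ZMod p), j b.2) : ZMod p × ZMod e) = ((b'.1 : ZMod p), j b'.2) → b = b' := by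
    intro b b' h
    have h2 := hsep (a₁ := (b, false)) (a₂ := (b', false)) (by simpa using h)
    exact (Prod.ext_iff.mp h2).1
  have sep_tf : ∀ b b' : Fin p × Fin d,
      (((b.1 : ZMod p), j b.2 - 1) : ZMod p × ZMod e) = ((b'.1 : ZMod p), j b'.2) → False := by
    intro b b' h
    have h2 := hsep (a₁ := (b, true)) (a₂ := (b', false)) (by simpa using h)
    simpa using (Prod.ext_iff.mp h2).2
  have res1 : ∀ b : Fin p × Fin d,
      resNd e j (1, b) = (((b.1 : ZMod p), j b.2) : ZMod p × ZMod e) := by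
    intro b; simp [resNd]
  have res2 : ∀ b : Fin p × Fin d,
      resNd e j (2, b) = (((b.1 : ZMod p), j b.2 - 1) : ZMod p × ZMod e) := by
    intro b
    unfold resNd
    refine Prod.ext_iff.mpr ⟨rfl, ?_⟩
    push_cast
    ring
  cases l with
  | single b1 =>
    cases m with
    | double b3 b4 c' hlt' hc1' hc2' => exact absurd hle id
    | single b3 =>
      exfalso
      apply hne
      let z : Fin n := ⟨0, by omega⟩
      have htz1 : (t z).1 = 1 := aux_t_first ht z rfl
      have htzb : (t z).2 = b1 :=
        (show t z ∈ nodes (MP.single b1) from ht.1.2 ▸ Set.mem_range_self z).1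
      have huz1 : (u z).1 = 1 := aux_u_first hu hinit z rfl
      have huzb : (u z).2 = b3 :=
        (show u z ∈ nodes (MP.single b3) from hu.2 ▸ Set.mem_range_self z).1
      have h0 := hres z
      rw [show t z = ((1, b1) : Nd p d) from Prod.ext_iff.mpr ⟨htz1, htzb⟩,
        show u z = ((1, b3) : Nd p d) from Prod.ext_iff.mpr ⟨huz1, huzb⟩, res1, res1] at h0
      rw [sep_ff _ _ h0]
  | double b1 b2 c hlt hc1 hc2 =>
    have hn2 : 2 ≤ n := by omega
    let z : Fin n := ⟨0, by omega⟩
    let o : Fin n := ⟨1, by omega⟩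
    have htz1 : (t z).1 = 1 := aux_t_first ht z rfl
    have htze : t z = (((t z).1, (t z).2) : Nd p d) := rfl
    have htzb : (t z).2 = b1 ∨ (t z).2 = b2 := by
      have hm : t z ∈ nodes (MP.double b1 b2 c hlt hc1 hc2) := ht.1.2 ▸ Set.mem_range_self z
      rcases hm with ⟨hb, _, _⟩ | ⟨hb, _, _⟩
      exacts [Or.inl hb, Or.inr hb]
    cases m with
    | single b3 =>
      show bLE' b1 b3
      have huz1 : (u z).1 = 1 := aux_u_first hu hinit z rfl
      have huzb : (u z).2 = b3 :=
        (show u z ∈ nodes (MP.single b3) from hu.2 ▸ Set.mem_range_self z).1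
      have h0 := hres z
      rw [show t z = ((1, (t z).2) : Nd p d) from Prod.ext_iff.mpr ⟨htz1, rfl⟩,
        show u z = ((1, b3) : Nd p d) from Prod.ext_iff.mpr ⟨huz1, huzb⟩, res1, res1] at h0
      have htz3 : (t z).2 = b3 := sep_ff _ _ h0
      rcases htzb with hb | hb
      · exact Or.inr (hb.symm.trans htz3)
      · have hb23 : b2 = b3 := hb.symm.trans htz3
        obtain ⟨k, hk⟩ : ∃ k, t k = ((1, b1) : Nd p d) := by
          have hm : ((1, b1) : Nd p d) ∈ nodes (MP.double b1 b2 c hlt hc1 hc2) :=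
            Or.inl ⟨rfl, le_rfl, hc1⟩
          rw [← ht.1.2] at hm; exact hm
        have hrk := hres k
        rw [hk, res1] at hrk
        have hub : (u k).2 = b3 :=
          (show u k ∈ nodes (MP.single b3) from hu.2 ▸ Set.mem_range_self k).1
        have hik := congrArg Prod.fst hrk
        simp only [resNd, hub] at hik
        have hii : b1.1 = b3.1 := by
          have hv := congrArg ZMod.val hik
          rw [ZMod.val_cast_of_lt b1.1.isLt, ZMod.val_cast_of_lt b3.1.isLt] at hv
          exact Fin.ext hv
        left
        rcases hlt with h | ⟨_, h⟩
        · rw [← hb23]; exact h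
        · exfalso; rw [hb23, hii] at h; exact lt_irrefl _ h
    | double b3 b4 c' hlt' hc1' hc2' =>
      obtain ⟨hA, hB, hC⟩ := hle
      have huz : u z = ((1, b3) : Nd p d) := aux_u_z_double hu hinit z rfl
      have huo : u o = ((1, b4) : Nd p d) := aux_u_o_double hu hinit z o rfl rfl
      have h0 := hres z
      rw [show t z = ((1, (t z).2) : Nd p d) from Prod.ext_iff.mpr ⟨htz1, rfl⟩,
        huz, res1, res1] at h0
      have htz3 : (t z).2 = b3 := sep_ff _ _ h0
      have h1' := hres o
      rcases aux_t_o ht z o rfl rfl htz1 with ⟨hbeq, hrow2⟩ | ⟨hbne, hrow1⟩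
      · exfalso
        rw [show t o = ((2, (t o).2) : Nd p d) from Prod.ext_iff.mpr ⟨hrow2, rfl⟩,
          huo, res2, res1] at h1'
        exact sep_tf _ _ h1'
      · rw [show t o = ((1, (t o).2) : Nd p d) from Prod.ext_iff.mpr ⟨hrow1, rfl⟩,
          huo, res1, res1] at h1'
        have hto4 : (t o).2 = b4 := sep_ff _ _ h1'
        have htob : (t o).2 = b1 ∨ (t o).2 = b2 := by
          have hm : t o ∈ nodes (MP.double b1 b2 c hlt hc1 hc2) := ht.1.2 ▸ Set.mem_range_self o
          rcases hm with ⟨hb, _, _⟩ | ⟨hb, _, _⟩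
          exacts [Or.inl hb, Or.inr hb]
        rcases htzb with hb | hb
        · have hb13 : b1 = b3 := hb.symm.trans htz3
          have hb24 : b2 = b4 := by
            rcases htob with hb' | hb'
            · exact absurd (hb'.trans hb.symm) hbne
            · exact hb'.symm.trans hto4
          refine ⟨Or.inr hb13, Or.inr hb24, ?_⟩
          rcases hC with h | h | ⟨hh1, hh2, hh3⟩
          · exact Or.inl h
          · exact Or.inr (Or.inl h)
          · exfalso
            rw [← hb13] at hh3
            exact bLE_bLT_asymm hh3 hlt
        · exfalso
          have hb23 : b2 = b3 := hb.symm.trans htz3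
          have hb14 : b1 = b4 := by
            rcases htob with hb' | hb'
            · exact hb'.symm.trans hto4
            · exact absurd (hb'.trans hb.symm) hbne
          rw [← hb23, ← hb14] at hlt'
          exact bLT_asymm hlt hlt'
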